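/- For every integer n ≥ 1, the following determinant evaluation holds in the polynomial ring ℤ[Q, r, X_1, …, X_n]: det_{1≤i,j≤n}( X_i^{j} (1+X_i)^{j−1} (Q + rX_i + QX_i)^{n−j} ) = ∏_{i=1}^n X_i · ∏_{1≤i<j≤n} (X_j − X_i) · ( Q(1+X_i)(1+X_j) + rX_iX_j ). -/

import Mathlib

noncomputable section

/-- The polynomial ring `ℤ[Q, r, X_1, …, X_n]`. -/
abbrev PR (n : ℕ) : Type := MvPolynomial (Fin n ⊕ Fin 2) ℤ

/-- The variable `X_i`. -/
def Xv (n : ℕ) (i : Fin n) : PR n := MvPolynomial.X (Sum.inl i)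

/-- The variable `Q`. -/
def Qv (n : ℕ) : PR n := MvPolynomial.X (Sum.inr 0)

/-- The variable `r`. -/
def rv (n : ℕ) : PR n := MvPolynomial.X (Sum.inr 1)

lemma aux_prod_pow {M : Type*} [CommMonoid M] {n : ℕ} (f : Fin n → M) :
    ∏ i : Fin n, ∏ j ∈ Finset.Ioi i, (f i * f j) = ∏ i : Fin n, f i ^ (n - 1) := by
  simp_rw [Finset.prod_mul_distrib, Finset.prod_const]
  rw [Finset.prod_comm' (t' := Finset.univ) (s' := fun j => Finset.Iio j)
    (f := fun _ j => f j) (by intro i j; simp [Finset.mem_Ioi, Finset.mem_Iio])]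
  simp_rw [Finset.prod_const, ← Finset.prod_mul_distrib, ← pow_add]
  apply Finset.prod_congr rfl
  intro i _
  congr 1
  rw [Fin.card_Ioi, Fin.card_Iio]
  have : (i : ℕ) < n := i.isLt
  omega

lemma aux_det {F : Type*} [Field F] {n : ℕ} (a b : Fin n → F) (hb : ∀ i, b i ≠ 0) :
    (Matrix.of fun i j : Fin n => a i ^ (j : ℕ) * b i ^ (n - 1 - (j : ℕ))).det =
    ∏ i : Fin n, ∏ j ∈ Finset.Ioi i, (a j * b i - a i * b j) := by
  have key : (Matrix.of fun i j : Fin n => a i ^ (j : ℕ) * b i ^ (n - 1 - (j : ℕ))) =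
      Matrix.of fun i j : Fin n =>
        (fun i => b i ^ (n - 1)) i * Matrix.vandermonde (fun i => a i / b i) i j := by
    ext i j
    have hj : (j : ℕ) ≤ n - 1 := Nat.le_pred_of_lt j.isLt
    simp only [Matrix.of_apply, Matrix.vandermonde_apply, div_pow]
    rw [mul_div_assoc', eq_div_iff (pow_ne_zero _ (hb i)), mul_assoc,
      pow_sub_mul_pow (b i) hj]
    ring
  rw [key, Matrix.det_mul_column, Matrix.det_vandermonde, ← aux_prod_pow b,
    ← Finset.prod_mul_distrib]
  apply Finset.prod_congr rfl
  intro i _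
  rw [← Finset.prod_mul_distrib]
  apply Finset.prod_congr rfl
  intro j _
  have h1 := hb i
  have h2 := hb j
  field_simp

lemma aux_ne_zero (n : ℕ) (i : Fin n) :
    Qv n + rv n * Xv n i + Qv n * Xv n i ≠ 0 := by
  intro h
  have := congrArg (MvPolynomial.eval (fun s => if s = Sum.inr 0 then (1 : ℤ) else 0)) h
  simp [Qv, rv, Xv] at this

/-- The Vandermonde-type determinant evaluation used for the `m → ∞` limit. -/
theorem stmt_13 (n : ℕ) (hn : 1 ≤ n) :
    (Matrix.of fun i j : Fin n =>
        Xv n i ^ ((j : ℕ) + 1) * (1 + Xv n i) ^ (j : ℕ) *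
          (Qv n + rv n * Xv n i + Qv n * Xv n i) ^ (n - 1 - (j : ℕ))).det =
    (∏ i : Fin n, Xv n i) *
      ∏ i : Fin n, ∏ j ∈ Finset.Ioi i,
        (Xv n j - Xv n i) *
          (Qv n * (1 + Xv n i) * (1 + Xv n j) + rv n * Xv n i * Xv n j) := by
  have hrw : (Matrix.of fun i j : Fin n =>
        Xv n i ^ ((j : ℕ) + 1) * (1 + Xv n i) ^ (j : ℕ) *
          (Qv n + rv n * Xv n i + Qv n * Xv n i) ^ (n - 1 - (j : ℕ))) =
      Matrix.of fun i j : Fin n => (fun i => Xv n i) i *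
        (Matrix.of fun i j : Fin n => (Xv n i * (1 + Xv n i)) ^ (j : ℕ) *
          (Qv n + rv n * Xv n i + Qv n * Xv n i) ^ (n - 1 - (j : ℕ))) i j := by
    ext i j
    simp only [Matrix.of_apply, mul_pow, pow_succ]
    ring
  rw [hrw, Matrix.det_mul_column]
  congr 1
  -- transfer to the fraction field
  set K := FractionRing (PR n)
  set φ : PR n →+* K := algebraMap (PR n) K with hφ
  have hinj : Function.Injective φ := IsFractionRing.injective (PR n) K
  apply hinj
  rw [RingHom.map_det, map_prod]
  have hmm : (φ.mapMatrix (Matrix.of fun i j : Fin n =>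
      (Xv n i * (1 + Xv n i)) ^ (j : ℕ) *
        (Qv n + rv n * Xv n i + Qv n * Xv n i) ^ (n - 1 - (j : ℕ)))) =
      Matrix.of fun i j : Fin n =>
        (fun i => φ (Xv n i * (1 + Xv n i))) i ^ (j : ℕ) *
        (fun i => φ (Qv n + rv n * Xv n i + Qv n * Xv n i)) i ^ (n - 1 - (j : ℕ)) := by
    ext i j
    simp [map_mul, map_pow]
  rw [hmm, aux_det _ _ (fun i => fun h => aux_ne_zero n i (hinj (by simpa using h)))]
  apply Finset.prod_congr rfl
  intro i _
  rw [map_prod]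
  apply Finset.prod_congr rfl
  intro j _
  rw [← map_mul, ← map_mul, ← map_sub]
  exact congrArg φ (by ring)
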